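/- Let X be a real Hilbert space, 0 < α < 1, 0 < r < min{1/2, (1−α)/α}, T > 0, A > 0, and let σ₁ > max{1, (2−α)/((2r−1)α+1)} and σ₂ > max{1, (2−α)/(α+1)}. For an integer M ≥ 2, define the graded temporal grid t_j := (j/M)^{σ₁} · T/2 for 0 ≤ j ≤ M and t_j := T − (2 − j/M)^{σ₂} · T/2 for M < j ≤ 2M. Let p : [0,T] → X be continuous, continuously differentiable on (0,T), with ‖p'(t)‖ ≤ A (t^{αr+α/2−1} + (T−t)^{α/2−1}) for 0 < t < T, and let Q_τ p be the piecewise average of p on this grid: (Q_τ p)(t) := (t_j − t_{j−1})^{−1} ∫_{t_{j−1}}^{t_j} p(s) ds for t ∈ (t_{j−1}, t_j). Then there exists a constant C depending only on α, r, σ₁, σ₂ and T such that (∫₀ᵀ ‖p(t) − (Q_τ p)(t)‖² dt)^{1/2} ≤ C A M^{α/2−1} for every integer M ≥ 2. -/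

import Mathlib

open Real Set MeasureTheory intervalIntegral Finset

lemma rpow_diff_le_max {μ a b : ℝ} (hμ : 0 < μ) (ha : 0 < a) (hab : a < b) :
    b ^ μ - a ^ μ ≤ μ * max (a ^ (μ - 1)) (b ^ (μ - 1)) * (b - a) := by
  obtain ⟨ξ, hξ, hslope⟩ := exists_hasDerivAt_eq_slope (fun x => x ^ μ)
    (fun x => μ * x ^ (μ - 1)) hab
    (fun x hx => ((Real.hasDerivAt_rpow_const
      (Or.inl (ne_of_gt (lt_of_lt_of_le ha hx.1)))).continuousAt).continuousWithinAt)
    (fun x hx => Real.hasDerivAt_rpow_const (Or.inl (ne_of_gt (lt_trans ha hx.1))))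
  have hξa : a < ξ := hξ.1
  have hξb : ξ < b := hξ.2
  have hξ0 : 0 < ξ := lt_trans ha hξa
  have key : b ^ μ - a ^ μ = μ * ξ ^ (μ - 1) * (b - a) := by
    rw [eq_div_iff (by linarith : b - a ≠ 0)] at hslope
    linarith
  rw [key]
  have hle : ξ ^ (μ - 1) ≤ max (a ^ (μ - 1)) (b ^ (μ - 1)) := by
    rcases le_or_gt 0 (μ - 1) with h | h
    · exact le_max_of_le_right (Real.rpow_le_rpow hξ0.le hξb.le h)
    · exact le_max_of_le_left (Real.rpow_le_rpow_of_nonpos ha hξa.le h.le)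
  have h1 : 0 ≤ b - a := by linarith
  gcongr

lemma rpow_diff_ge_min {μ a b : ℝ} (hμ : 0 < μ) (ha : 0 < a) (hab : a < b) :
    μ * min (a ^ (μ - 1)) (b ^ (μ - 1)) * (b - a) ≤ b ^ μ - a ^ μ := by
  obtain ⟨ξ, hξ, hslope⟩ := exists_hasDerivAt_eq_slope (fun x => x ^ μ)
    (fun x => μ * x ^ (μ - 1)) hab
    (fun x hx => ((Real.hasDerivAt_rpow_const
      (Or.inl (ne_of_gt (lt_of_lt_of_le ha hx.1)))).continuousAt).continuousWithinAt)
    (fun x hx => Real.hasDerivAt_rpow_const (Or.inl (ne_of_gt (lt_trans ha hx.1))))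
  have hξa : a < ξ := hξ.1
  have hξb : ξ < b := hξ.2
  have hξ0 : 0 < ξ := lt_trans ha hξa
  have key : b ^ μ - a ^ μ = μ * ξ ^ (μ - 1) * (b - a) := by
    rw [eq_div_iff (by linarith : b - a ≠ 0)] at hslope
    linarith
  rw [key]
  have hle : min (a ^ (μ - 1)) (b ^ (μ - 1)) ≤ ξ ^ (μ - 1) := by
    rcases le_or_gt 0 (μ - 1) with h | h
    · exact min_le_of_left_le (Real.rpow_le_rpow ha.le hξa.le h)
    · exact min_le_of_right_le (Real.rpow_le_rpow_of_nonpos hξ0 hξb.le h.le)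
  have h1 : 0 ≤ b - a := by linarith
  gcongr

lemma sum_rpow_le {e : ℝ} (he : -1 < e) :
    ∃ K > (0:ℝ), ∀ M : ℕ, (∑ j ∈ Finset.range M, ((j : ℝ) + 1) ^ e) ≤ K * (M : ℝ) ^ (e + 1) := by
  rcases le_or_gt 0 e with h0 | h0
  · refine ⟨1, one_pos, fun M => ?_⟩
    rcases Nat.eq_zero_or_pos M with rfl | hM
    · simp [Real.zero_rpow (by linarith : e + 1 ≠ 0)]
    have hMpos : (0:ℝ) < M := by exact_mod_cast hM
    calc (∑ j ∈ Finset.range M, ((j : ℝ) + 1) ^ e)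
        ≤ ∑ j ∈ Finset.range M, (M : ℝ) ^ e := by
          apply Finset.sum_le_sum
          intro j hj
          apply Real.rpow_le_rpow (by positivity) _ h0
          have := Finset.mem_range.mp hj
          have : (j:ℝ) + 1 ≤ M := by exact_mod_cast Nat.succ_le_of_lt this
          linarith
      _ = (M : ℝ) * (M : ℝ) ^ e := by
          rw [Finset.sum_const, Finset.card_range, nsmul_eq_mul]
      _ = 1 * (M : ℝ) ^ (e + 1) := by
          rw [one_mul, add_comm, Real.rpow_add hMpos, Real.rpow_one]
  · have he1 : 0 < e + 1 := by linarith
    refine ⟨1 / (e + 1), by positivity, fun M => ?_⟩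
    induction M with
    | zero => simp [Real.zero_rpow (by linarith : e + 1 ≠ 0)]
    | succ M ih =>
      have step : (e + 1) * ((M : ℝ) + 1) ^ e ≤ ((M : ℝ) + 1) ^ (e + 1) - (M : ℝ) ^ (e + 1) := by
        rcases Nat.eq_zero_or_pos M with rfl | hM
        · simp only [Nat.cast_zero, zero_add, Real.one_rpow]
          rw [Real.zero_rpow (ne_of_gt he1)]
          linarith
        · have hMpos : (0:ℝ) < M := by exact_mod_cast hM
          have := rpow_diff_ge_min (a := (M:ℝ)) (b := (M:ℝ)+1) he1 hMpos (by linarith)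
          have hmin : min ((M:ℝ) ^ (e + 1 - 1)) (((M:ℝ)+1) ^ (e + 1 - 1)) = ((M:ℝ)+1) ^ e := by
            rw [min_eq_right]
            · norm_num
            · apply Real.rpow_le_rpow_of_nonpos hMpos (by linarith) (by linarith)
          rw [hmin] at this
          have h2 : (M:ℝ) + 1 - M = 1 := by ring
          rw [h2, mul_one] at this
          linarith
      rw [Finset.sum_range_succ]
      push_cast
      have : (e+1) * (∑ j ∈ Finset.range M, ((j : ℝ) + 1) ^ e) ≤ (M : ℝ) ^ (e + 1) := by
        have := ih
        calc (e+1) * (∑ j ∈ Finset.range M, ((j : ℝ) + 1) ^ e)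
            ≤ (e+1) * (1 / (e + 1) * (M : ℝ) ^ (e + 1)) := by
              apply mul_le_mul_of_nonneg_left ih he1.le
          _ = (M : ℝ) ^ (e + 1) := by field_simp
      rw [div_mul_eq_mul_div, le_div_iff₀ he1]
      ring_nf
      ring_nf at this step ⊢
      nlinarith [step, this]
lemma grid_diff_le {μ : ℝ} (hμ : 0 < μ) :
    ∃ K > (0:ℝ), ∀ M : ℕ, 1 ≤ M → ∀ j : ℕ, 1 ≤ j → j ≤ M →
      ((j : ℝ) / M) ^ μ - (((j : ℝ) - 1) / M) ^ μ ≤ K * ((j : ℝ) / M) ^ (μ - 1) / M := by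
  refine ⟨1 + μ * (2 ^ (1 - μ) + 1), by positivity, fun M hM j hj hjM => ?_⟩
  have hMpos : (0:ℝ) < M := by exact_mod_cast hM
  have hjpos : (0:ℝ) < j := by exact_mod_cast hj
  have hbpos : (0:ℝ) < (j : ℝ) / M := by positivity
  have hK1 : (1:ℝ) ≤ 1 + μ * (2 ^ (1 - μ) + 1) := by nlinarith [Real.rpow_pos_of_pos two_pos (1 - μ), hμ]
  set K := 1 + μ * (2 ^ (1 - μ) + 1) with hK
  rcases eq_or_lt_of_le hj with hj1 | hj2
  · -- j = 1
    have hjj : (j:ℝ) = 1 := by exact_mod_cast hj1.symm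
    rw [hjj]
    have h0 : ((1:ℝ) - 1) / M = 0 := by ring
    rw [h0, Real.zero_rpow (ne_of_gt hμ), sub_zero]
    have hne : ((1:ℝ)/M) ≠ 0 := by positivity
    have he : ((1:ℝ)/M) ^ (μ - 1) * ((1:ℝ)/M) = ((1:ℝ)/M) ^ μ := by
      rw [← Real.rpow_add_one hne, sub_add_cancel]
    have hpow : (0:ℝ) ≤ ((1:ℝ)/M) ^ (μ - 1) := Real.rpow_nonneg (by positivity) _
    calc ((1:ℝ)/M) ^ μ = ((1:ℝ)/M) ^ (μ - 1) * ((1:ℝ)/M) := he.symm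
      _ = ((1:ℝ)/M) ^ (μ - 1) / M := by ring
      _ ≤ K * ((1:ℝ)/M) ^ (μ - 1) / M := by
          gcongr
          nlinarith
  · -- j ≥ 2
    have hj2' : (2:ℝ) ≤ j := by exact_mod_cast hj2
    have hapos : (0:ℝ) < ((j:ℝ) - 1) / M := div_pos (by linarith) hMpos
    have hab' : ((j:ℝ) - 1) / M < (j:ℝ) / M := by
      rw [div_lt_div_iff₀ hMpos hMpos]; nlinarith
    have hdiff := rpow_diff_le_max hμ hapos hab'
    have hsub : (j:ℝ) / M - ((j:ℝ) - 1) / M = 1 / M := by field_simp; ring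
    rw [hsub] at hdiff
    have hb : (0:ℝ) ≤ ((j:ℝ)/M) ^ (μ - 1) := Real.rpow_nonneg hbpos.le _
    have h2 : (0:ℝ) < 2 ^ (1 - μ) := Real.rpow_pos_of_pos two_pos _
    have hmax : max ((((j:ℝ) - 1) / M) ^ (μ - 1)) (((j:ℝ) / M) ^ (μ - 1))
        ≤ (2 ^ (1 - μ) + 1) * ((j:ℝ) / M) ^ (μ - 1) := by
      apply max_le
      · rcases le_or_gt 1 μ with h1 | h1
        · have : (((j:ℝ) - 1) / M) ^ (μ - 1) ≤ ((j:ℝ) / M) ^ (μ - 1) :=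
            Real.rpow_le_rpow hapos.le hab'.le (by linarith)
          nlinarith
        · have hhalf : ((j:ℝ)/M) / 2 ≤ ((j:ℝ) - 1) / M := by
            rw [div_div, div_le_div_iff₀ (by positivity) hMpos]
            nlinarith [mul_nonneg (by linarith : (0:ℝ) ≤ (j:ℝ) - 2) hMpos.le]
          have h1' : (((j:ℝ) - 1) / M) ^ (μ - 1) ≤ (((j:ℝ)/M) / 2) ^ (μ - 1) :=
            Real.rpow_le_rpow_of_nonpos (by positivity) hhalf (by linarith)
          have h2' : (((j:ℝ)/M) / 2) ^ (μ - 1) = ((j:ℝ)/M) ^ (μ - 1) * 2 ^ (1 - μ) := by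
            rw [Real.div_rpow hbpos.le (by norm_num : (0:ℝ) ≤ 2),
              show (μ - 1) = -(1 - μ) by ring, Real.rpow_neg (by norm_num : (0:ℝ) ≤ 2)]
            rw [show -(1-μ) = μ - 1 by ring]
            field_simp
          rw [h2'] at h1'
          nlinarith
      · nlinarith
    calc ((j:ℝ) / M) ^ μ - (((j:ℝ) - 1) / M) ^ μ
        ≤ μ * max ((((j:ℝ) - 1) / M) ^ (μ - 1)) (((j:ℝ) / M) ^ (μ - 1)) * (1 / M) := hdiff
      _ ≤ μ * ((2 ^ (1 - μ) + 1) * ((j:ℝ) / M) ^ (μ - 1)) * (1 / M) := by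
          apply mul_le_mul_of_nonneg_right _ (by positivity)
          exact mul_le_mul_of_nonneg_left hmax hμ.le
      _ ≤ K * ((j:ℝ) / M) ^ (μ - 1) / M := by
          rw [div_eq_mul_one_div (K * ((j:ℝ) / M) ^ (μ - 1)) (M:ℝ)]
          apply mul_le_mul_of_nonneg_right _ (by positivity)
          nlinarith
set_option maxHeartbeats 2000000 in
lemma side_sum (α σ δ Ca Cb : ℝ) (hα : 0 < α) (hα1 : α < 1) (hσ : 1 < σ) (hδ : 0 < δ)
    (hkey : 2 - α < σ * (1 + 2 * δ)) (hCa : 0 ≤ Ca) (hCb : 0 ≤ Cb) :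
    ∃ K > (0:ℝ), ∀ M : ℕ, 1 ≤ M →
    ∑ k ∈ Finset.range M,
      (((((k:ℝ)+1))/M) ^ σ - ((k:ℝ)/M) ^ σ) *
      (Ca * (((((k:ℝ)+1))/M) ^ (σ*δ) - ((k:ℝ)/M) ^ (σ*δ)) +
       Cb * (((((k:ℝ)+1))/M) ^ σ - ((k:ℝ)/M) ^ σ)) ^ 2
      ≤ K * (M:ℝ) ^ (α - 2) := by
  have hσ0 : (0:ℝ) < σ := by linarith
  have hσδ0 : (0:ℝ) < σ * δ := by positivity
  obtain ⟨K₁, hK₁, hD₁⟩ := grid_diff_le hσ0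
  obtain ⟨K₂, hK₂, hD₂⟩ := grid_diff_le hσδ0
  set e1 : ℝ := σ * (1 + 2*δ) - 3 with he1def
  set e2 : ℝ := 3*σ - 3 with he2def
  have he1 : (-1:ℝ) < e1 + α := by rw [he1def]; linarith
  have he2 : (-1:ℝ) < e2 := by rw [he2def]; linarith
  obtain ⟨S₁, hS₁, hsum₁⟩ := sum_rpow_le he1
  obtain ⟨S₂, hS₂, hsum₂⟩ := sum_rpow_le he2
  set C1 : ℝ := 2 * K₁ * (Ca * K₂)^2 with hC1def
  set C2 : ℝ := 2 * K₁ * (Cb * K₁)^2 with hC2def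
  refine ⟨C1 * S₁ + C2 * S₂ + 1, by positivity, fun M hM => ?_⟩
  have hMpos : (0:ℝ) < M := by exact_mod_cast hM
  -- per-term bound
  have hterm : ∀ k ∈ Finset.range M,
      (((((k:ℝ)+1))/M) ^ σ - ((k:ℝ)/M) ^ σ) *
      (Ca * (((((k:ℝ)+1))/M) ^ (σ*δ) - ((k:ℝ)/M) ^ (σ*δ)) +
       Cb * (((((k:ℝ)+1))/M) ^ σ - ((k:ℝ)/M) ^ σ)) ^ 2
      ≤ (C1 * ((((k:ℝ)+1))/M) ^ (e1) + C2 * ((((k:ℝ)+1))/M) ^ (e2)) / (M:ℝ)^(3:ℕ) := by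
    intro k _
    have hk1 : 1 ≤ k + 1 := Nat.le_add_left 1 k
    have hkM : k + 1 ≤ M := by
      have := Finset.mem_range.mp ‹k ∈ Finset.range M›
      omega
    have hcast : (((k+1 : ℕ)):ℝ) = (k:ℝ) + 1 := by push_cast; ring
    have hxpos : (0:ℝ) < ((k:ℝ)+1)/M := by positivity
    set x : ℝ := ((k:ℝ)+1)/M with hxdef
    have hb₁ := hD₁ M hM (k+1) hk1 hkM
    have hb₂ := hD₂ M hM (k+1) hk1 hkM
    rw [hcast] at hb₁ hb₂
    have hsimp : ((k:ℝ) + 1 - 1) / M = (k:ℝ)/M := by ring_nf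
    rw [hsimp] at hb₁ hb₂
    have hDσpos : 0 ≤ x ^ σ - ((k:ℝ)/M) ^ σ := by
      have : ((k:ℝ)/M) ^ σ ≤ x ^ σ := by
        apply Real.rpow_le_rpow (by positivity) _ hσ0.le
        rw [hxdef]; gcongr; linarith
      linarith
    have hDδpos : 0 ≤ x ^ (σ*δ) - ((k:ℝ)/M) ^ (σ*δ) := by
      have : ((k:ℝ)/M) ^ (σ*δ) ≤ x ^ (σ*δ) := by
        apply Real.rpow_le_rpow (by positivity) _ hσδ0.le
        rw [hxdef]; gcongr; linarith
      linarith
    have hx1 : 0 ≤ x ^ (σ - 1) := Real.rpow_nonneg hxpos.le _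
    have hx2 : 0 ≤ x ^ (σ*δ - 1) := Real.rpow_nonneg hxpos.le _
    -- S ≤ Y / M
    have hS : Ca * (x ^ (σ*δ) - ((k:ℝ)/M) ^ (σ*δ)) + Cb * (x ^ σ - ((k:ℝ)/M) ^ σ)
        ≤ (Ca * (K₂ * x ^ (σ*δ - 1)) + Cb * (K₁ * x ^ (σ - 1))) / M := by
      rw [add_div]
      apply add_le_add
      · rw [mul_div_assoc]
        apply mul_le_mul_of_nonneg_left _ hCa
        calc x ^ (σ*δ) - ((k:ℝ)/M) ^ (σ*δ) ≤ K₂ * x ^ (σ*δ - 1) / M := hb₂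
          _ = K₂ * x ^ (σ*δ - 1) / M := rfl
      · rw [mul_div_assoc]
        apply mul_le_mul_of_nonneg_left _ hCb
        exact hb₁
    have hSpos : 0 ≤ Ca * (x ^ (σ*δ) - ((k:ℝ)/M) ^ (σ*δ)) + Cb * (x ^ σ - ((k:ℝ)/M) ^ σ) := by
      have := mul_nonneg hCa hDδpos
      have := mul_nonneg hCb hDσpos
      linarith
    set Y : ℝ := Ca * (K₂ * x ^ (σ*δ - 1)) + Cb * (K₁ * x ^ (σ - 1)) with hYdef
    have hYpos : 0 ≤ Y := by
      rw [hYdef]; positivity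
    have hsq : (Ca * (x ^ (σ*δ) - ((k:ℝ)/M) ^ (σ*δ)) + Cb * (x ^ σ - ((k:ℝ)/M) ^ σ)) ^ 2
        ≤ Y^2 / (M:ℝ)^(2:ℕ) := by
      have := pow_le_pow_left₀ hSpos hS 2
      calc (Ca * (x ^ (σ*δ) - ((k:ℝ)/M) ^ (σ*δ)) + Cb * (x ^ σ - ((k:ℝ)/M) ^ σ)) ^ 2
          ≤ (Y / M)^2 := this
        _ = Y^2 / (M:ℝ)^(2:ℕ) := by rw [div_pow]
    have hY2 : Y^2 ≤ 2 * (Ca*K₂)^2 * x ^ (2*(σ*δ) - 2) + 2 * (Cb*K₁)^2 * x ^ (2*σ - 2) := by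
      have e1' : (x ^ (σ*δ - 1))^2 = x ^ (2*(σ*δ) - 2) := by
        rw [← Real.rpow_natCast (x ^ (σ*δ - 1)) 2, ← Real.rpow_mul hxpos.le]
        norm_num; ring_nf
      have e2' : (x ^ (σ - 1))^2 = x ^ (2*σ - 2) := by
        rw [← Real.rpow_natCast (x ^ (σ - 1)) 2, ← Real.rpow_mul hxpos.le]
        norm_num; ring_nf
      have key : Y^2 ≤ 2 * (Ca * (K₂ * x ^ (σ*δ - 1)))^2 + 2 * (Cb * (K₁ * x ^ (σ - 1)))^2 := by
        rw [hYdef]; nlinarith [sq_nonneg (Ca * (K₂ * x ^ (σ*δ - 1)) - Cb * (K₁ * x ^ (σ - 1)))]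
      calc Y^2 ≤ 2 * (Ca * (K₂ * x ^ (σ*δ - 1)))^2 + 2 * (Cb * (K₁ * x ^ (σ - 1)))^2 := key
        _ = 2 * (Ca*K₂)^2 * (x ^ (σ*δ - 1))^2 + 2 * (Cb*K₁)^2 * (x ^ (σ - 1))^2 := by ring
        _ = 2 * (Ca*K₂)^2 * x ^ (2*(σ*δ) - 2) + 2 * (Cb*K₁)^2 * x ^ (2*σ - 2) := by
            rw [e1', e2']
    -- assemble
    have hDσ' : x ^ σ - ((k:ℝ)/M) ^ σ ≤ K₁ * x ^ (σ - 1) / M := hb₁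
    have step : (x ^ σ - ((k:ℝ)/M) ^ σ) *
        (Ca * (x ^ (σ*δ) - ((k:ℝ)/M) ^ (σ*δ)) + Cb * (x ^ σ - ((k:ℝ)/M) ^ σ)) ^ 2
        ≤ (K₁ * x ^ (σ - 1) / M) * (Y^2 / (M:ℝ)^(2:ℕ)) := by
      apply mul_le_mul hDσ' hsq (by positivity) (by positivity)
    refine le_trans step ?_
    have hcomb1 : x ^ (σ - 1) * x ^ (2*(σ*δ) - 2) = x ^ e1 := by
      rw [← Real.rpow_add hxpos]; congr 1; rw [he1def]; ring
    have hcomb2 : x ^ (σ - 1) * x ^ (2*σ - 2) = x ^ e2 := by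
      rw [← Real.rpow_add hxpos]; congr 1; rw [he2def]; ring
    have expand : (K₁ * x ^ (σ - 1) / M) * ((2 * (Ca*K₂)^2 * x ^ (2*(σ*δ) - 2) + 2 * (Cb*K₁)^2 * x ^ (2*σ - 2)) / (M:ℝ)^(2:ℕ))
        = (C1 * x ^ e1 + C2 * x ^ e2) / (M:ℝ)^(3:ℕ) := by
      rw [hC1def, hC2def]
      field_simp
      rw [← hcomb1, ← hcomb2]
      ring
    calc (K₁ * x ^ (σ - 1) / M) * (Y^2 / (M:ℝ)^(2:ℕ))
        ≤ (K₁ * x ^ (σ - 1) / M) * ((2 * (Ca*K₂)^2 * x ^ (2*(σ*δ) - 2) + 2 * (Cb*K₁)^2 * x ^ (2*σ - 2)) / (M:ℝ)^(2:ℕ)) := by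
          apply mul_le_mul_of_nonneg_left _ (by positivity)
          exact (div_le_div_iff_of_pos_right (by positivity)).mpr hY2
      _ = (C1 * x ^ e1 + C2 * x ^ e2) / (M:ℝ)^(3:ℕ) := expand
  have hM1 : (1:ℝ) ≤ M := by exact_mod_cast hM
  have hxsum1 : ∑ k ∈ Finset.range M, ((((k:ℝ)+1))/M) ^ e1 ≤ S₁ * (M:ℝ) ^ (α+1) := by
    have hpt : ∀ k ∈ Finset.range M, ((((k:ℝ)+1))/M) ^ e1 ≤ ((k:ℝ)+1) ^ (e1+α) / (M:ℝ) ^ e1 := by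
      intro k _
      rw [Real.div_rpow (by positivity) hMpos.le]
      apply (div_le_div_iff_of_pos_right (Real.rpow_pos_of_pos hMpos e1)).mpr
      exact Real.rpow_le_rpow_of_exponent_le (by
          have : (0:ℝ) ≤ (k:ℝ) := Nat.cast_nonneg k
          linarith) (by linarith)
    calc ∑ k ∈ Finset.range M, ((((k:ℝ)+1))/M) ^ e1
        ≤ ∑ k ∈ Finset.range M, ((k:ℝ)+1) ^ (e1+α) / (M:ℝ) ^ e1 := Finset.sum_le_sum hpt
      _ = (∑ k ∈ Finset.range M, ((k:ℝ)+1) ^ (e1+α)) / (M:ℝ) ^ e1 := by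
          rw [Finset.sum_div]
      _ ≤ (S₁ * (M:ℝ) ^ (e1+α+1)) / (M:ℝ) ^ e1 := by
          exact (div_le_div_iff_of_pos_right (Real.rpow_pos_of_pos hMpos e1)).mpr (hsum₁ M)
      _ = S₁ * (M:ℝ) ^ (α+1) := by
          rw [mul_div_assoc]
          congr 1
          rw [div_eq_iff (ne_of_gt (Real.rpow_pos_of_pos hMpos e1)), ← Real.rpow_add hMpos]
          congr 1; ring
  have hxsum2 : ∑ k ∈ Finset.range M, ((((k:ℝ)+1))/M) ^ e2 ≤ S₂ * (M:ℝ) := by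
    have hpt : ∀ k ∈ Finset.range M, ((((k:ℝ)+1))/M) ^ e2 ≤ ((k:ℝ)+1) ^ e2 / (M:ℝ) ^ e2 := by
      intro k _
      rw [Real.div_rpow (by positivity) hMpos.le]
    calc ∑ k ∈ Finset.range M, ((((k:ℝ)+1))/M) ^ e2
        ≤ ∑ k ∈ Finset.range M, ((k:ℝ)+1) ^ e2 / (M:ℝ) ^ e2 := Finset.sum_le_sum hpt
      _ = (∑ k ∈ Finset.range M, ((k:ℝ)+1) ^ e2) / (M:ℝ) ^ e2 := by rw [Finset.sum_div]
      _ ≤ (S₂ * (M:ℝ) ^ (e2+1)) / (M:ℝ) ^ e2 := by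
          exact (div_le_div_iff_of_pos_right (Real.rpow_pos_of_pos hMpos e2)).mpr (hsum₂ M)
      _ = S₂ * (M:ℝ) := by
          rw [mul_div_assoc]
          congr 1
          rw [div_eq_iff (ne_of_gt (Real.rpow_pos_of_pos hMpos e2)),
            Real.rpow_add hMpos, Real.rpow_one, mul_comm]
  have hr1 : (M:ℝ) ^ (α+1) / (M:ℝ)^(3:ℕ) = (M:ℝ) ^ (α-2) := by
    rw [← Real.rpow_natCast (M:ℝ) 3, ← Real.rpow_sub hMpos]
    norm_num
    congr 1
    ring
  have hr2 : (M:ℝ) / (M:ℝ)^(3:ℕ) ≤ (M:ℝ) ^ (α-2) := by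
    have : (M:ℝ) / (M:ℝ)^(3:ℕ) = (M:ℝ) ^ ((-2:ℝ)) := by
      rw [div_eq_iff (by positivity : ((M:ℝ)^(3:ℕ)) ≠ 0), ← Real.rpow_natCast (M:ℝ) 3,
        ← Real.rpow_add hMpos]
      norm_num
    rw [this]
    exact Real.rpow_le_rpow_of_exponent_le hM1 (by linarith)
  have hMa : (0:ℝ) < (M:ℝ) ^ (α-2) := Real.rpow_pos_of_pos hMpos _
  calc ∑ k ∈ Finset.range M,
      (((((k:ℝ)+1))/M) ^ σ - ((k:ℝ)/M) ^ σ) *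
      (Ca * (((((k:ℝ)+1))/M) ^ (σ*δ) - ((k:ℝ)/M) ^ (σ*δ)) +
       Cb * (((((k:ℝ)+1))/M) ^ σ - ((k:ℝ)/M) ^ σ)) ^ 2
      ≤ ∑ k ∈ Finset.range M,
        (C1 * ((((k:ℝ)+1))/M) ^ (e1) + C2 * ((((k:ℝ)+1))/M) ^ (e2)) / (M:ℝ)^(3:ℕ) :=
        Finset.sum_le_sum hterm
    _ = (C1 * (∑ k ∈ Finset.range M, ((((k:ℝ)+1))/M) ^ e1)
        + C2 * (∑ k ∈ Finset.range M, ((((k:ℝ)+1))/M) ^ e2)) / (M:ℝ)^(3:ℕ) := by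
        rw [← Finset.sum_div, Finset.sum_add_distrib, ← Finset.mul_sum, ← Finset.mul_sum]
    _ ≤ (C1 * (S₁ * (M:ℝ) ^ (α+1)) + C2 * (S₂ * (M:ℝ))) / (M:ℝ)^(3:ℕ) := by
        apply (div_le_div_iff_of_pos_right (by positivity : (0:ℝ) < ((M:ℝ)^(3:ℕ)))).mpr
        have hC1nn : (0:ℝ) ≤ C1 := by rw [hC1def]; positivity
        have hC2nn : (0:ℝ) ≤ C2 := by rw [hC2def]; positivity
        exact add_le_add (mul_le_mul_of_nonneg_left hxsum1 hC1nn)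
          (mul_le_mul_of_nonneg_left hxsum2 hC2nn)
    _ = C1 * S₁ * ((M:ℝ) ^ (α+1) / (M:ℝ)^(3:ℕ)) + C2 * S₂ * ((M:ℝ) / (M:ℝ)^(3:ℕ)) := by
        ring
    _ ≤ C1 * S₁ * (M:ℝ) ^ (α-2) + C2 * S₂ * (M:ℝ) ^ (α-2) := by
        apply add_le_add
        · rw [hr1]
        · apply mul_le_mul_of_nonneg_left hr2 (by positivity)
    _ ≤ (C1 * S₁ + C2 * S₂ + 1) * (M:ℝ) ^ (α-2) := by nlinarith
/-- The graded temporal grid on `[0,T]`: `t_j = (j/M)^{σ₁} T/2` for `0 ≤ j ≤ M` and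
`t_j = T − (2 − j/M)^{σ₂} T/2` for `M < j ≤ 2M`. -/
noncomputable def gradedGrid (σ₁ σ₂ T : ℝ) (M j : ℕ) : ℝ :=
  if j ≤ M then ((j : ℝ) / (M : ℝ)) ^ σ₁ * (T / 2)
  else T - (2 - (j : ℝ) / (M : ℝ)) ^ σ₂ * (T / 2)

lemma gradedGrid_left {σ₁ σ₂ T : ℝ} {M j : ℕ} (h : j ≤ M) :
    gradedGrid σ₁ σ₂ T M j = ((j : ℝ) / (M : ℝ)) ^ σ₁ * (T / 2) := if_pos h

lemma gradedGrid_right {σ₁ σ₂ T : ℝ} {M j : ℕ} (hM : 1 ≤ M) (h1 : M ≤ j) (h2 : j ≤ 2 * M) :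
    gradedGrid σ₁ σ₂ T M j = T - ((2 * (M:ℝ) - j) / M) ^ σ₂ * (T / 2) := by
  have hMpos : (0:ℝ) < M := by exact_mod_cast hM
  rcases eq_or_lt_of_le h1 with rfl | hlt
  · rw [gradedGrid_left (le_refl M)]
    have h1' : (M:ℝ)/(M:ℝ) = 1 := div_self (ne_of_gt hMpos)
    have h2' : (2*(M:ℝ) - M)/M = 1 := by field_simp; ring
    rw [h1', h2', Real.one_rpow, Real.one_rpow]
    ring
  · unfold gradedGrid
    rw [if_neg (by omega)]
    congr 2
    field_simp
lemma gradedGrid_zero {σ₁ σ₂ T : ℝ} (hσ₁ : 0 < σ₁) {M : ℕ} (hM : 1 ≤ M) :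
    gradedGrid σ₁ σ₂ T M 0 = 0 := by
  rw [gradedGrid_left (Nat.zero_le M)]
  simp [Real.zero_rpow (ne_of_gt hσ₁)]

lemma gradedGrid_last {σ₁ σ₂ T : ℝ} (hσ₂ : 0 < σ₂) {M : ℕ} (hM : 1 ≤ M) :
    gradedGrid σ₁ σ₂ T M (2 * M) = T := by
  rw [gradedGrid_right hM (by omega) (le_refl _)]
  have hMpos : (0:ℝ) < M := by exact_mod_cast hM
  have : (2*(M:ℝ) - (2*M : ℕ)) / M = 0 := by push_cast; field_simp; ring
  rw [this, Real.zero_rpow (ne_of_gt hσ₂)]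
  ring

lemma gradedGrid_left_bounds {σ₁ σ₂ T : ℝ} (hσ₁ : 0 < σ₁) (hT : 0 < T) {M j : ℕ}
    (hM : 1 ≤ M) (h : j ≤ M) :
    0 ≤ gradedGrid σ₁ σ₂ T M j ∧ gradedGrid σ₁ σ₂ T M j ≤ T / 2 := by
  rw [gradedGrid_left h]
  have hMpos : (0:ℝ) < M := by exact_mod_cast hM
  have h0 : (0:ℝ) ≤ (j:ℝ)/M := by positivity
  have h1 : ((j:ℝ)/M) ≤ 1 := by
    rw [div_le_one hMpos]; exact_mod_cast h
  have hle1 : ((j:ℝ)/M) ^ σ₁ ≤ 1 := Real.rpow_le_one h0 h1 hσ₁.le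
  constructor
  · positivity
  · nlinarith [Real.rpow_nonneg h0 σ₁]

lemma gradedGrid_right_bounds {σ₁ σ₂ T : ℝ} (hσ₂ : 0 < σ₂) (hT : 0 < T) {M j : ℕ}
    (hM : 1 ≤ M) (h1 : M ≤ j) (h2 : j ≤ 2 * M) :
    T / 2 ≤ gradedGrid σ₁ σ₂ T M j ∧ gradedGrid σ₁ σ₂ T M j ≤ T := by
  rw [gradedGrid_right hM h1 h2]
  have hMpos : (0:ℝ) < M := by exact_mod_cast hM
  have hj2 : (j:ℝ) ≤ 2*M := by exact_mod_cast h2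
  have hjM : (M:ℝ) ≤ j := by exact_mod_cast h1
  have h0 : (0:ℝ) ≤ (2*(M:ℝ) - j)/M := by
    apply div_nonneg _ hMpos.le; linarith
  have hle : (2*(M:ℝ) - j)/M ≤ 1 := by
    rw [div_le_one hMpos]; linarith
  have hle1 : ((2*(M:ℝ) - j)/M) ^ σ₂ ≤ 1 := Real.rpow_le_one h0 hle hσ₂.le
  constructor
  · nlinarith
  · nlinarith [Real.rpow_nonneg h0 σ₂]

lemma gradedGrid_lt {σ₁ σ₂ T : ℝ} (hσ₁ : 0 < σ₁) (hσ₂ : 0 < σ₂) (hT : 0 < T) {M j : ℕ}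
    (hM : 1 ≤ M) (h : j < 2 * M) :
    gradedGrid σ₁ σ₂ T M j < gradedGrid σ₁ σ₂ T M (j + 1) := by
  have hMpos : (0:ℝ) < M := by exact_mod_cast hM
  rcases le_or_gt (j + 1) M with hc | hc
  · rw [gradedGrid_left hc, gradedGrid_left (by omega)]
    have : ((j:ℝ)/M) ^ σ₁ < (((j+1:ℕ):ℝ)/M) ^ σ₁ := by
      apply Real.rpow_lt_rpow (by positivity) _ hσ₁
      apply (div_lt_div_iff_of_pos_right hMpos).mpr
      push_cast; linarith
    nlinarith
  · have hjM : M ≤ j := by omega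
    rw [gradedGrid_right hM hjM (by omega), gradedGrid_right hM (by omega) (by omega)]
    have hj2 : (j:ℝ) + 1 ≤ 2*M := by exact_mod_cast h
    have : ((2*(M:ℝ) - (j+1:ℕ))/M) ^ σ₂ < ((2*(M:ℝ) - j)/M) ^ σ₂ := by
      apply Real.rpow_lt_rpow (div_nonneg (by push_cast; linarith) hMpos.le) _ hσ₂
      · apply (div_lt_div_iff_of_pos_right hMpos).mpr
        push_cast; linarith
    nlinarith
lemma cell_est {X : Type*} [NormedAddCommGroup X] [InnerProductSpace ℝ X] [CompleteSpace X]
    {T A β γ : ℝ} (hT : 0 < T) (hA : 0 < A) (hβ : (-1:ℝ) < β) (hγ : (-1:ℝ) < γ)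
    {p p' : ℝ → X}
    (hp : ContinuousOn p (Set.Icc 0 T))
    (hderiv : ∀ t ∈ Set.Ioo (0:ℝ) T, HasDerivAt p (p' t) t)
    (hp'c : ContinuousOn p' (Set.Ioo 0 T))
    (hbound : ∀ t ∈ Set.Ioo (0:ℝ) T, ‖p' t‖ ≤ A * (t ^ β + (T - t) ^ γ))
    {a b : ℝ} (ha : 0 ≤ a) (hab : a < b) (hb : b ≤ T)
    {t : ℝ} (ht : t ∈ Set.Ioo a b) :
    ‖p t - (b - a)⁻¹ • ∫ s in a..b, p s‖ ≤ A * ∫ s in a..b, (s ^ β + (T - s) ^ γ) := by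
  have hIoosub : Set.Ioo a b ⊆ Set.Ioo 0 T := Set.Ioo_subset_Ioo (by linarith) (by linarith)
  have hIccsub : Set.Icc a b ⊆ Set.Icc 0 T := Set.Icc_subset_Icc (by linarith) (by linarith)
  have hgnn : ∀ x ∈ Set.Icc a b, 0 ≤ x ^ β + (T - x) ^ γ := by
    intro x hx
    have h1 : 0 ≤ x := le_trans ha hx.1
    have h2 : 0 ≤ T - x := by have := hx.2; linarith [hIccsub hx |>.2]
    positivity
  -- integrability of g
  have hgi : IntervalIntegrable (fun s => s ^ β + (T - s) ^ γ) volume a b := by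
    apply IntervalIntegrable.add
    · exact intervalIntegrable_rpow' hβ
    · have h := (intervalIntegrable_rpow' (a := T - a) (b := T - b) (r := γ) hγ).comp_sub_left T
      simpa using h
  have hGnn : 0 ≤ ∫ s in a..b, (s ^ β + (T - s) ^ γ) :=
    intervalIntegral.integral_nonneg hab.le hgnn
  set G : ℝ := ∫ s in a..b, (s ^ β + (T - s) ^ γ) with hGdef
  -- integrability of p'
  have hAgi : IntervalIntegrable (fun s => A * (s ^ β + (T - s) ^ γ)) volume a b := by
    simpa [smul_eq_mul] using hgi.const_mul A
  have hp'i : IntervalIntegrable p' volume a b := by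
    rw [intervalIntegrable_iff_integrableOn_Ioo_of_le hab.le]
    apply MeasureTheory.Integrable.mono
      ((intervalIntegrable_iff_integrableOn_Ioo_of_le hab.le).mp hAgi)
      ((hp'c.mono hIoosub).aestronglyMeasurable measurableSet_Ioo)
    apply (MeasureTheory.ae_restrict_iff' measurableSet_Ioo).mpr (Filter.Eventually.of_forall ?_)
    intro x hx
    have hx' := hIoosub hx
    have hb1 := hbound x hx'
    have : ‖A * (x ^ β + (T - x) ^ γ)‖ = A * (x ^ β + (T - x) ^ γ) := by
      rw [Real.norm_of_nonneg]
      exact mul_nonneg hA.le (hgnn x ⟨hx.1.le, hx.2.le⟩)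
    rw [this]
    exact hb1
  -- p-increment bound
  have hdiff : ∀ s ∈ Set.Icc a b, ∀ u ∈ Set.Icc a b, s ≤ u → ‖p u - p s‖ ≤ A * G := by
    intro s hs u hu hsu
    have hftc : ∫ x in s..u, p' x = p u - p s := by
      apply intervalIntegral.integral_eq_sub_of_hasDeriv_right_of_le hsu
        (hp.mono (Set.Icc_subset_Icc (le_trans ha hs.1) (le_trans hu.2 hb)))
      · intro x hx
        have hx0 : 0 < x := lt_of_le_of_lt (le_trans ha hs.1) hx.1
        have hxT : x < T := lt_of_lt_of_le (lt_of_lt_of_le hx.2 hu.2) hb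
        exact (hderiv x ⟨hx0, hxT⟩).hasDerivWithinAt
      · exact hp'i.mono_set (Set.uIcc_subset_uIcc
          (Set.mem_uIcc.mpr (Or.inl ⟨hs.1, le_trans hsu hu.2⟩))
          (Set.mem_uIcc.mpr (Or.inl ⟨le_trans hs.1 hsu, hu.2⟩)))
    rw [← hftc]
    calc ‖∫ x in s..u, p' x‖ ≤ ∫ x in s..u, ‖p' x‖ :=
          intervalIntegral.norm_integral_le_integral_norm hsu
      _ ≤ ∫ x in a..b, ‖p' x‖ := by
          apply intervalIntegral.integral_mono_interval hs.1 hsu hu.2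
          · exact Filter.Eventually.of_forall fun x => norm_nonneg _
          · exact hp'i.norm
      _ ≤ ∫ x in a..b, A * (x ^ β + (T - x) ^ γ) := by
          rw [intervalIntegral.integral_of_le hab.le, intervalIntegral.integral_of_le hab.le,
            MeasureTheory.integral_Ioc_eq_integral_Ioo, MeasureTheory.integral_Ioc_eq_integral_Ioo]
          apply MeasureTheory.setIntegral_mono_on
          · exact ((intervalIntegrable_iff_integrableOn_Ioo_of_le hab.le).mp hp'i).norm
          · exact (intervalIntegrable_iff_integrableOn_Ioo_of_le hab.le).mp hAgi
          · exact measurableSet_Ioo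
          · intro x hx
            exact hbound x (hIoosub hx)
      _ = A * G := by
          simp_rw [← smul_eq_mul]
          rw [intervalIntegral.integral_smul]
  -- average representation
  have hpi : IntervalIntegrable p volume a b := by
    apply ContinuousOn.intervalIntegrable
    apply hp.mono
    rw [Set.uIcc_of_le hab.le]
    exact hIccsub
  have hbne : b - a ≠ 0 := ne_of_gt (by linarith)
  have hrepr : p t - (b - a)⁻¹ • ∫ s in a..b, p s
      = (b - a)⁻¹ • ∫ s in a..b, (p t - p s) := by
    rw [intervalIntegral.integral_sub intervalIntegrable_const hpi,
      intervalIntegral.integral_const, smul_sub, smul_smul,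
      inv_mul_cancel₀ hbne, one_smul]
  rw [hrepr, norm_smul]
  have hinv : ‖(b - a)⁻¹‖ = (b - a)⁻¹ := Real.norm_of_nonneg (by
    have : 0 < b - a := by linarith
    positivity)
  rw [hinv]
  have hnormint : ‖∫ s in a..b, (p t - p s)‖ ≤ (A * G) * |b - a| := by
    apply intervalIntegral.norm_integral_le_of_norm_le_const
    intro x hx
    rw [Set.uIoc_of_le hab.le] at hx
    have hxI : x ∈ Set.Icc a b := ⟨hx.1.le, hx.2⟩
    have htI : t ∈ Set.Icc a b := ⟨ht.1.le, ht.2.le⟩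
    rcases le_total t x with hc | hc
    · rw [norm_sub_rev]
      exact hdiff t htI x hxI hc
    · exact hdiff x hxI t htI hc
  calc (b - a)⁻¹ * ‖∫ s in a..b, (p t - p s)‖
      ≤ (b - a)⁻¹ * ((A * G) * |b - a|) := by
        apply mul_le_mul_of_nonneg_left hnormint
        have : 0 < b - a := by linarith
        positivity
    _ = A * G := by
        rw [abs_of_pos (by linarith : (0:ℝ) < b - a)]
        field_simp
set_option maxHeartbeats 2000000

/-- `L²`-in-time interpolation error estimate on the doubly graded grid: if
`‖p'(t)‖ ≤ A (t^(αr+α/2−1) + (T−t)^(α/2−1))` and `Q_τ p` is the cellwise average of `p`,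
then `(∫₀ᵀ ‖p(t) − (Q_τ p)(t)‖² dt)^{1/2} ≤ C A M^(α/2−1)`. -/
theorem L2_interpolation_error_graded_grid
    {X : Type*} [NormedAddCommGroup X] [InnerProductSpace ℝ X] [CompleteSpace X]
    (α r T σ₁ σ₂ : ℝ) (hα : 0 < α) (hα1 : α < 1)
    (hr : 0 < r) (hr2 : r < min (1 / 2) ((1 - α) / α))
    (hσ₁ : max 1 ((2 - α) / ((2 * r - 1) * α + 1)) < σ₁)
    (hσ₂ : max 1 ((2 - α) / (α + 1)) < σ₂) (hT : 0 < T) :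
    ∃ C > (0 : ℝ), ∀ (A : ℝ), 0 < A → ∀ (M : ℕ), 2 ≤ M → ∀ (p p' Q : ℝ → X),
      ContinuousOn p (Set.Icc 0 T) →
      (∀ t ∈ Set.Ioo (0 : ℝ) T, HasDerivAt p (p' t) t) →
      ContinuousOn p' (Set.Ioo 0 T) →
      (∀ t ∈ Set.Ioo (0 : ℝ) T,
        ‖p' t‖ ≤ A * (t ^ (α * r + α / 2 - 1) + (T - t) ^ (α / 2 - 1))) →
      (∀ j : ℕ, 1 ≤ j → j ≤ 2 * M →
        ∀ t ∈ Set.Ioo (gradedGrid σ₁ σ₂ T M (j - 1)) (gradedGrid σ₁ σ₂ T M j),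
          Q t = (gradedGrid σ₁ σ₂ T M j - gradedGrid σ₁ σ₂ T M (j - 1))⁻¹ •
            ∫ s in (gradedGrid σ₁ σ₂ T M (j - 1))..(gradedGrid σ₁ σ₂ T M j), p s) →
      Real.sqrt (∫ t in (0 : ℝ)..T, ‖p t - Q t‖ ^ 2)
        ≤ C * A * (M : ℝ) ^ (α / 2 - 1) := by
  set β : ℝ := α * r + α / 2 - 1 with hβdef
  set γ : ℝ := α / 2 - 1 with hγdef
  set c : ℝ := T / 2 with hcdef
  have hc : 0 < c := by rw [hcdef]; linarith
  have hσ₁1 : 1 < σ₁ := lt_of_le_of_lt (le_max_left _ _) hσ₁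
  have hσ₂1 : 1 < σ₂ := lt_of_le_of_lt (le_max_left _ _) hσ₂
  have hβ : (-1:ℝ) < β := by rw [hβdef]; nlinarith
  have hβ1 : (0:ℝ) < β + 1 := by linarith
  have hγ : (-1:ℝ) < γ := by rw [hγdef]; nlinarith
  have hγ1 : (0:ℝ) < γ + 1 := by linarith
  have hγneg : γ ≤ 0 := by rw [hγdef]; linarith
  have key1 : 2 - α < σ₁ * (1 + 2 * (β + 1)) := by
    have hden : (0:ℝ) < (2 * r - 1) * α + 1 := by nlinarith
    have h1 : (2 - α) / ((2 * r - 1) * α + 1) < σ₁ :=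
      lt_of_le_of_lt (le_max_right _ _) hσ₁
    rw [div_lt_iff₀ hden] at h1
    have hσ₁0 : (0:ℝ) < σ₁ := by linarith
    rw [hβdef]; nlinarith
  have key2 : 2 - α < σ₂ * (1 + 2 * (γ + 1)) := by
    have h1 : (2 - α) / (α + 1) < σ₂ := lt_of_le_of_lt (le_max_right _ _) hσ₂
    rw [div_lt_iff₀ (by linarith)] at h1
    rw [hγdef]; nlinarith
  set Ca₁ : ℝ := c ^ (β + 1) / (β + 1) with hCa₁def
  set Cb₁ : ℝ := c ^ γ * c with hCb₁def
  set Ca₂ : ℝ := c ^ (γ + 1) / (γ + 1) with hCa₂def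
  set Cb₂ : ℝ := (c ^ β + T ^ β) * c with hCb₂def
  have hCa₁ : 0 ≤ Ca₁ := by rw [hCa₁def]; positivity
  have hCb₁ : 0 ≤ Cb₁ := by rw [hCb₁def]; positivity
  have hCa₂ : 0 ≤ Ca₂ := by rw [hCa₂def]; positivity
  have hCb₂ : 0 ≤ Cb₂ := by rw [hCb₂def]; positivity
  obtain ⟨Kl, hKl, hKlsum⟩ := side_sum α σ₁ (β + 1) Ca₁ Cb₁ hα hα1 hσ₁1 hβ1 key1 hCa₁ hCb₁
  obtain ⟨Kr, hKr, hKrsum⟩ := side_sum α σ₂ (γ + 1) Ca₂ Cb₂ hα hα1 hσ₂1 hγ1 key2 hCa₂ hCb₂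
  refine ⟨Real.sqrt (c * (Kl + Kr)), Real.sqrt_pos.mpr (by positivity), ?_⟩
  intro A hA M hM p p' Q hp hderiv hp'c hbound hQ
  have hM1 : 1 ≤ M := by omega
  have hMpos : (0:ℝ) < M := by exact_mod_cast hM1
  have hσ₁0 : (0:ℝ) < σ₁ := by linarith
  have hσ₂0 : (0:ℝ) < σ₂ := by linarith
  set a : ℕ → ℝ := gradedGrid σ₁ σ₂ T M with hadef
  have ha0 : a 0 = 0 := gradedGrid_zero hσ₁0 hM1
  have haN : a (2 * M) = T := gradedGrid_last hσ₂0 hM1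
  have hstep : ∀ j, j < 2 * M → a j < a (j + 1) :=
    fun j hj => gradedGrid_lt hσ₁0 hσ₂0 hT hM1 hj
  have hbnd : ∀ j, j ≤ 2 * M → 0 ≤ a j ∧ a j ≤ T := by
    intro j hj
    rcases le_or_gt j M with h | h
    · obtain ⟨h1, h2⟩ := gradedGrid_left_bounds hσ₁0 hT hM1 h
      exact ⟨h1, by rw [hadef]; linarith⟩
    · obtain ⟨h1, h2⟩ := gradedGrid_right_bounds hσ₂0 hT hM1 h.le hj
      exact ⟨by rw [hadef]; linarith, h2⟩
  have hRHSpos : (0:ℝ) < Real.sqrt (c * (Kl + Kr)) * A * (M:ℝ) ^ (α/2 - 1) := by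
    have := Real.sqrt_pos.mpr (by positivity : (0:ℝ) < c * (Kl + Kr))
    have := Real.rpow_pos_of_pos hMpos (α/2 - 1)
    positivity
  by_cases hInt : IntervalIntegrable (fun t => ‖p t - Q t‖ ^ 2) volume 0 T
  swap
  · rw [intervalIntegral.integral_undef hInt, Real.sqrt_zero]
    exact hRHSpos.le
  -- cell-wise estimates
  set g : ℝ → ℝ := fun s => s ^ β + (T - s) ^ γ with hgdef
  set G : ℕ → ℝ := fun j => ∫ s in a j..a (j + 1), g s with hGdef
  have hsub : ∀ j, j < 2 * M →
      Set.uIcc (a j) (a (j + 1)) ⊆ Set.uIcc (0:ℝ) T := by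
    intro j hj
    rw [Set.uIcc_of_le (hstep j hj).le, Set.uIcc_of_le hT.le]
    exact Set.Icc_subset_Icc (hbnd j (by omega)).1 (hbnd (j+1) (by omega)).2
  have hcell : ∀ j, j < 2 * M →
      (∫ t in a j..a (j + 1), ‖p t - Q t‖ ^ 2) ≤ (a (j + 1) - a j) * (A * G j) ^ 2 := by
    intro j hj
    have hlt := hstep j hj
    have h0j : 0 ≤ a j := (hbnd j (by omega)).1
    have hjT : a (j + 1) ≤ T := (hbnd (j+1) (by omega)).2
    have hpt : ∀ t ∈ Set.Ioo (a j) (a (j + 1)), ‖p t - Q t‖ ≤ A * G j := by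
      intro t htmem
      have hmem' : t ∈ Set.Ioo (gradedGrid σ₁ σ₂ T M ((j+1) - 1)) (gradedGrid σ₁ σ₂ T M (j+1)) := by
        rw [Nat.add_sub_cancel]
        exact htmem
      have hQt := hQ (j+1) (by omega) (by omega) t hmem'
      rw [Nat.add_sub_cancel] at hQt
      rw [hQt]
      exact cell_est hT hA hβ hγ hp hderiv hp'c hbound h0j hlt hjT htmem
    have hIntcell : MeasureTheory.IntegrableOn (fun t => ‖p t - Q t‖ ^ 2)
        (Set.Ioo (a j) (a (j+1))) volume :=
      (intervalIntegrable_iff_integrableOn_Ioo_of_le hlt.le).mp (hInt.mono_set (hsub j hj))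
    rw [intervalIntegral.integral_of_le hlt.le, MeasureTheory.integral_Ioc_eq_integral_Ioo]
    have hconst_int : MeasureTheory.IntegrableOn (fun _ => (A * G j)^2)
        (Set.Ioo (a j) (a (j+1))) volume := by
      apply (MeasureTheory.integrableOn_const_iff).mpr
      right; rw [Real.volume_Ioo]; exact ENNReal.ofReal_lt_top
    calc (∫ t in Set.Ioo (a j) (a (j+1)), ‖p t - Q t‖ ^ 2)
        ≤ ∫ _t in Set.Ioo (a j) (a (j+1)), (A * G j)^2 := by
          apply MeasureTheory.setIntegral_mono_on hIntcell hconst_int measurableSet_Ioo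
          intro x hx
          exact pow_le_pow_left₀ (norm_nonneg _) (hpt x hx) 2
      _ = (a (j+1) - a j) * (A * G j)^2 := by
          rw [MeasureTheory.setIntegral_const, measureReal_def, Real.volume_Ioo,
            ENNReal.toReal_ofReal (by linarith : (0:ℝ) ≤ a (j+1) - a j), smul_eq_mul]
  have hsplit : (∫ t in (0:ℝ)..T, ‖p t - Q t‖ ^ 2)
      = ∑ j ∈ Finset.range (2 * M), ∫ t in a j..a (j + 1), ‖p t - Q t‖ ^ 2 := by
    rw [← ha0, ← haN]
    exact (intervalIntegral.sum_integral_adjacent_intervals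
      (fun k hk => hInt.mono_set (hsub k hk))).symm
  have hGnn : ∀ j, j < 2 * M → 0 ≤ G j := by
    intro j hj
    apply intervalIntegral.integral_nonneg (hstep j hj).le
    intro x hx
    have h1 : 0 ≤ x := le_trans (hbnd j (by omega)).1 hx.1
    have h2 : 0 ≤ T - x := by
      have := le_trans hx.2 (hbnd (j+1) (by omega)).2
      linarith
    have : (0:ℝ) ≤ x ^ β + (T - x) ^ γ := by positivity
    simpa [hgdef] using this
  have hGsplit : ∀ j, G j = (∫ s in a j..a (j+1), s ^ β)
      + ∫ s in a j..a (j+1), (T - s) ^ γ := by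
    intro j
    rw [show G j = ∫ s in a j..a (j+1), (s ^ β + (T - s) ^ γ) from rfl]
    apply intervalIntegral.integral_add (intervalIntegrable_rpow' hβ)
    have h := (intervalIntegrable_rpow' (a := T - a j) (b := T - a (j+1)) (r := γ) hγ).comp_sub_left T
    simpa using h
  have hleft : ∑ j ∈ Finset.range M, (a (j + 1) - a j) * (A * G j) ^ 2
      ≤ A ^ 2 * (c * Kl) * (M:ℝ) ^ (α - 2) := by
    have hterm : ∀ j ∈ Finset.range M, (a (j + 1) - a j) * (A * G j) ^ 2
        ≤ (A ^ 2 * c) * (((((j:ℝ)+1))/M) ^ σ₁ - ((j:ℝ)/M) ^ σ₁) *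
          (Ca₁ * (((((j:ℝ)+1))/M) ^ (σ₁*(β+1)) - ((j:ℝ)/M) ^ (σ₁*(β+1))) +
           Cb₁ * (((((j:ℝ)+1))/M) ^ σ₁ - ((j:ℝ)/M) ^ σ₁)) ^ 2 := by
      intro j hjm
      have hj : j < M := Finset.mem_range.mp hjm
      have hjlt : j < 2 * M := by omega
      have hlt := hstep j hjlt
      set x : ℝ := ((j:ℝ)+1)/M with hxdef
      set y : ℝ := (j:ℝ)/M with hydef
      have hy0 : 0 ≤ y := by rw [hydef]; positivity
      have hx0 : 0 ≤ x := by rw [hxdef]; positivity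
      have hyx : y ≤ x := by
        rw [hxdef, hydef]; gcongr; linarith
      have hxa : a (j+1) = x ^ σ₁ * c := by
        rw [hadef, gradedGrid_left (by omega : j + 1 ≤ M), hxdef, hcdef]
        push_cast; ring
      have hya : a j = y ^ σ₁ * c := by
        rw [hadef, gradedGrid_left (by omega : j ≤ M), hydef, hcdef]
      have hD : a (j+1) - a j = c * (x ^ σ₁ - y ^ σ₁) := by
        rw [hxa, hya]; ring
      have hDσnn : 0 ≤ x ^ σ₁ - y ^ σ₁ :=
        sub_nonneg.mpr (Real.rpow_le_rpow hy0 hyx hσ₁0.le)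
      have hI1 : (∫ s in a j..a (j+1), s ^ β)
          = Ca₁ * (x ^ (σ₁*(β+1)) - y ^ (σ₁*(β+1))) := by
        rw [integral_rpow (Or.inl hβ), hxa, hya,
          Real.mul_rpow (Real.rpow_nonneg hx0 σ₁) hc.le,
          Real.mul_rpow (Real.rpow_nonneg hy0 σ₁) hc.le,
          ← Real.rpow_mul hx0, ← Real.rpow_mul hy0, hCa₁def]
        field_simp
      have hcellc : a (j+1) ≤ c := by
        have := (gradedGrid_left_bounds (σ₂ := σ₂) hσ₁0 hT hM1 (by omega : j + 1 ≤ M)).2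
        rw [hadef, hcdef]; exact this
      have hI2 : (∫ s in a j..a (j+1), (T - s) ^ γ) ≤ Cb₁ * (x ^ σ₁ - y ^ σ₁) := by
        have hint2 : IntervalIntegrable (fun s => (T - s) ^ γ) volume (a j) (a (j+1)) := by
          have h := (intervalIntegrable_rpow' (a := T - a j) (b := T - a (j+1)) (r := γ) hγ).comp_sub_left T
          simpa using h
        calc (∫ s in a j..a (j+1), (T - s) ^ γ)
            ≤ ∫ _s in a j..a (j+1), c ^ γ := by
              apply intervalIntegral.integral_mono_on hlt.le hint2 intervalIntegrable_const
              intro s hs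
              apply Real.rpow_le_rpow_of_nonpos hc _ hγneg
              have hsc : s ≤ c := le_trans hs.2 hcellc
              rw [hcdef] at hsc ⊢
              linarith
          _ = (a (j+1) - a j) * c ^ γ := by
              rw [intervalIntegral.integral_const, smul_eq_mul]
          _ = Cb₁ * (x ^ σ₁ - y ^ σ₁) := by
              rw [hD, hCb₁def]; ring
      have hGj : G j ≤ Ca₁ * (x ^ (σ₁*(β+1)) - y ^ (σ₁*(β+1))) + Cb₁ * (x ^ σ₁ - y ^ σ₁) := by
        rw [hGsplit j, hI1]
        linarith
      have hGnnj := hGnn j hjlt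
      calc (a (j + 1) - a j) * (A * G j) ^ 2
          = (A ^ 2 * c) * ((x ^ σ₁ - y ^ σ₁) * (G j) ^ 2) := by rw [hD]; ring
        _ ≤ (A ^ 2 * c) * ((x ^ σ₁ - y ^ σ₁) *
            (Ca₁ * (x ^ (σ₁*(β+1)) - y ^ (σ₁*(β+1))) + Cb₁ * (x ^ σ₁ - y ^ σ₁)) ^ 2) := by
            apply mul_le_mul_of_nonneg_left _ (by positivity)
            exact mul_le_mul_of_nonneg_left (pow_le_pow_left₀ hGnnj hGj 2) hDσnn
        _ = (A ^ 2 * c) * (x ^ σ₁ - y ^ σ₁) *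
            (Ca₁ * (x ^ (σ₁*(β+1)) - y ^ (σ₁*(β+1))) + Cb₁ * (x ^ σ₁ - y ^ σ₁)) ^ 2 := by
            ring
    calc ∑ j ∈ Finset.range M, (a (j + 1) - a j) * (A * G j) ^ 2
        ≤ ∑ j ∈ Finset.range M, (A ^ 2 * c) * (((((j:ℝ)+1))/M) ^ σ₁ - ((j:ℝ)/M) ^ σ₁) *
          (Ca₁ * (((((j:ℝ)+1))/M) ^ (σ₁*(β+1)) - ((j:ℝ)/M) ^ (σ₁*(β+1))) +
           Cb₁ * (((((j:ℝ)+1))/M) ^ σ₁ - ((j:ℝ)/M) ^ σ₁)) ^ 2 :=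
          Finset.sum_le_sum hterm
      _ = (A ^ 2 * c) * ∑ j ∈ Finset.range M, (((((j:ℝ)+1))/M) ^ σ₁ - ((j:ℝ)/M) ^ σ₁) *
          (Ca₁ * (((((j:ℝ)+1))/M) ^ (σ₁*(β+1)) - ((j:ℝ)/M) ^ (σ₁*(β+1))) +
           Cb₁ * (((((j:ℝ)+1))/M) ^ σ₁ - ((j:ℝ)/M) ^ σ₁)) ^ 2 := by
          rw [Finset.mul_sum]
          apply Finset.sum_congr rfl
          intro j _
          ring
      _ ≤ (A ^ 2 * c) * (Kl * (M:ℝ) ^ (α - 2)) := by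
          apply mul_le_mul_of_nonneg_left (hKlsum M hM1) (by positivity)
      _ = A ^ 2 * (c * Kl) * (M:ℝ) ^ (α - 2) := by ring
  have hright : ∑ i ∈ Finset.range M, (a (M + i + 1) - a (M + i)) * (A * G (M + i)) ^ 2
      ≤ A ^ 2 * (c * Kr) * (M:ℝ) ^ (α - 2) := by
    have hreindex : ∑ i ∈ Finset.range M, (a (M + i + 1) - a (M + i)) * (A * G (M + i)) ^ 2
        = ∑ n ∈ Finset.range M,
          (a (2*M - n) - a (2*M - n - 1)) * (A * G (2*M - n - 1)) ^ 2 := by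
      rw [← Finset.sum_range_reflect
        (fun n => (a (2*M - n) - a (2*M - n - 1)) * (A * G (2*M - n - 1)) ^ 2) M]
      apply Finset.sum_congr rfl
      intro i hi
      have hi' : i < M := Finset.mem_range.mp hi
      have h1 : 2*M - (M - 1 - i) = M + i + 1 := by omega
      have h2 : 2*M - (M - 1 - i) - 1 = M + i := by omega
      have h3 : M + i + 1 - 1 = M + i := by omega
      simp only [h1, h2, h3]
    rw [hreindex]
    have hterm : ∀ n ∈ Finset.range M,
        (a (2*M - n) - a (2*M - n - 1)) * (A * G (2*M - n - 1)) ^ 2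
        ≤ (A ^ 2 * c) * (((((n:ℝ)+1))/M) ^ σ₂ - ((n:ℝ)/M) ^ σ₂) *
          (Ca₂ * (((((n:ℝ)+1))/M) ^ (σ₂*(γ+1)) - ((n:ℝ)/M) ^ (σ₂*(γ+1))) +
           Cb₂ * (((((n:ℝ)+1))/M) ^ σ₂ - ((n:ℝ)/M) ^ σ₂)) ^ 2 := by
      intro n hnm
      have hn : n < M := Finset.mem_range.mp hnm
      have hjlt : 2*M - n - 1 < 2 * M := by omega
      have hlow : M ≤ 2*M - n - 1 := by omega
      have hidx : 2*M - n - 1 + 1 = 2*M - n := by omega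
      have hlt : a (2*M - n - 1) < a (2*M - n) := by
        have := hstep (2*M - n - 1) hjlt
        rwa [hidx] at this
      set u : ℝ := ((n:ℝ)+1)/M with hudef
      set v : ℝ := (n:ℝ)/M with hvdef
      have hv0 : 0 ≤ v := by rw [hvdef]; positivity
      have hu0 : 0 ≤ u := by rw [hudef]; positivity
      have hvu : v ≤ u := by rw [hudef, hvdef]; gcongr; linarith
      have hcast1 : (2*(M:ℝ) - ((2*M - n:ℕ):ℝ))/M = v := by
        rw [Nat.cast_sub (by omega : n ≤ 2*M), hvdef]; push_cast; ring_nf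
      have hcast2 : (2*(M:ℝ) - ((2*M - n - 1:ℕ):ℝ))/M = u := by
        rw [Nat.cast_sub (by omega : 1 ≤ 2*M - n), Nat.cast_sub (by omega : n ≤ 2*M), hudef]
        push_cast; ring_nf
      have hua : a (2*M - n) = T - v ^ σ₂ * c := by
        rw [hadef, gradedGrid_right hM1 (by omega) (by omega), hcdef, hcast1]
      have hub : a (2*M - n - 1) = T - u ^ σ₂ * c := by
        rw [hadef, gradedGrid_right hM1 (by omega) (by omega), hcdef, hcast2]
      have hD : a (2*M - n) - a (2*M - n - 1) = c * (u ^ σ₂ - v ^ σ₂) := by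
        rw [hua, hub]; ring
      have hDσnn : 0 ≤ u ^ σ₂ - v ^ σ₂ :=
        sub_nonneg.mpr (Real.rpow_le_rpow hv0 hvu hσ₂0.le)
      have hTa : T - a (2*M - n - 1) = u ^ σ₂ * c := by rw [hub]; ring
      have hTb : T - a (2*M - n) = v ^ σ₂ * c := by rw [hua]; ring
      have hI2 : (∫ s in a (2*M - n - 1)..a (2*M - n), (T - s) ^ γ)
          = Ca₂ * (u ^ (σ₂*(γ+1)) - v ^ (σ₂*(γ+1))) := by
        have hcomp := intervalIntegral.integral_comp_sub_left
          (a := a (2*M - n - 1)) (b := a (2*M - n)) (fun w => w ^ γ) T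
        rw [hcomp, integral_rpow (Or.inl hγ), hTa, hTb,
          Real.mul_rpow (Real.rpow_nonneg hu0 σ₂) hc.le,
          Real.mul_rpow (Real.rpow_nonneg hv0 σ₂) hc.le,
          ← Real.rpow_mul hu0, ← Real.rpow_mul hv0, hCa₂def]
        field_simp
      have hcellc : c ≤ a (2*M - n - 1) := by
        have := (gradedGrid_right_bounds (σ₁ := σ₁) hσ₂0 hT hM1 hlow (by omega)).1
        rw [hadef, hcdef]; exact this
      have haT : a (2*M - n) ≤ T := (hbnd (2*M - n) (by omega)).2
      have hI1 : (∫ s in a (2*M - n - 1)..a (2*M - n), s ^ β)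
          ≤ Cb₂ * (u ^ σ₂ - v ^ σ₂) := by
        calc (∫ s in a (2*M - n - 1)..a (2*M - n), s ^ β)
            ≤ ∫ _s in a (2*M - n - 1)..a (2*M - n), (c ^ β + T ^ β) := by
              apply intervalIntegral.integral_mono_on hlt.le
                (intervalIntegrable_rpow' hβ) intervalIntegrable_const
              intro s hs
              have hcs : c ≤ s := le_trans hcellc hs.1
              have hsT : s ≤ T := le_trans hs.2 haT
              rcases le_or_gt 0 β with hb0 | hb0
              · have : s ^ β ≤ T ^ β := Real.rpow_le_rpow (le_trans hc.le hcs) hsT hb0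
                have hcb : 0 ≤ c ^ β := Real.rpow_nonneg hc.le β
                linarith
              · have : s ^ β ≤ c ^ β := Real.rpow_le_rpow_of_nonpos hc hcs hb0.le
                have hTb' : 0 ≤ T ^ β := Real.rpow_nonneg hT.le β
                linarith
          _ = (a (2*M - n) - a (2*M - n - 1)) * (c ^ β + T ^ β) := by
              rw [intervalIntegral.integral_const, smul_eq_mul]
          _ = Cb₂ * (u ^ σ₂ - v ^ σ₂) := by
              rw [hD, hCb₂def]; ring
      have hGj : G (2*M - n - 1) ≤ Ca₂ * (u ^ (σ₂*(γ+1)) - v ^ (σ₂*(γ+1)))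
          + Cb₂ * (u ^ σ₂ - v ^ σ₂) := by
        have hGs := hGsplit (2*M - n - 1)
        rw [hidx] at hGs
        rw [hGs, hI2]
        linarith
      have hGnnj : 0 ≤ G (2*M - n - 1) := hGnn (2*M - n - 1) hjlt
      have hDidx : a (2*M - n - 1 + 1) = a (2*M - n) := by rw [hidx]
      calc (a (2*M - n) - a (2*M - n - 1)) * (A * G (2*M - n - 1)) ^ 2
          = (A ^ 2 * c) * ((u ^ σ₂ - v ^ σ₂) * (G (2*M - n - 1)) ^ 2) := by
            rw [hD]; ring
        _ ≤ (A ^ 2 * c) * ((u ^ σ₂ - v ^ σ₂) *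
            (Ca₂ * (u ^ (σ₂*(γ+1)) - v ^ (σ₂*(γ+1))) + Cb₂ * (u ^ σ₂ - v ^ σ₂)) ^ 2) := by
            apply mul_le_mul_of_nonneg_left _ (by positivity)
            exact mul_le_mul_of_nonneg_left (pow_le_pow_left₀ hGnnj hGj 2) hDσnn
        _ = (A ^ 2 * c) * (u ^ σ₂ - v ^ σ₂) *
            (Ca₂ * (u ^ (σ₂*(γ+1)) - v ^ (σ₂*(γ+1))) + Cb₂ * (u ^ σ₂ - v ^ σ₂)) ^ 2 := by
            ring
    calc ∑ n ∈ Finset.range M, (a (2*M - n) - a (2*M - n - 1)) * (A * G (2*M - n - 1)) ^ 2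
        ≤ ∑ n ∈ Finset.range M, (A ^ 2 * c) * (((((n:ℝ)+1))/M) ^ σ₂ - ((n:ℝ)/M) ^ σ₂) *
          (Ca₂ * (((((n:ℝ)+1))/M) ^ (σ₂*(γ+1)) - ((n:ℝ)/M) ^ (σ₂*(γ+1))) +
           Cb₂ * (((((n:ℝ)+1))/M) ^ σ₂ - ((n:ℝ)/M) ^ σ₂)) ^ 2 :=
          Finset.sum_le_sum hterm
      _ = (A ^ 2 * c) * ∑ n ∈ Finset.range M, (((((n:ℝ)+1))/M) ^ σ₂ - ((n:ℝ)/M) ^ σ₂) *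
          (Ca₂ * (((((n:ℝ)+1))/M) ^ (σ₂*(γ+1)) - ((n:ℝ)/M) ^ (σ₂*(γ+1))) +
           Cb₂ * (((((n:ℝ)+1))/M) ^ σ₂ - ((n:ℝ)/M) ^ σ₂)) ^ 2 := by
          rw [Finset.mul_sum]
          apply Finset.sum_congr rfl
          intro n _
          ring
      _ ≤ (A ^ 2 * c) * (Kr * (M:ℝ) ^ (α - 2)) := by
          apply mul_le_mul_of_nonneg_left (hKrsum M hM1) (by positivity)
      _ = A ^ 2 * (c * Kr) * (M:ℝ) ^ (α - 2) := by ring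
  have hsum_bound : ∑ j ∈ Finset.range (2 * M), (a (j + 1) - a j) * (A * G j) ^ 2
      ≤ A ^ 2 * (c * (Kl + Kr)) * (M:ℝ) ^ (α - 2) := by
    rw [show 2 * M = M + M by ring, Finset.sum_range_add]
    have : ∀ i ∈ Finset.range M, (a (M + i + 1) - a (M + i)) * (A * G (M + i)) ^ 2
        = (a ((M + i) + 1) - a (M + i)) * (A * G (M + i)) ^ 2 := by
      intro i _; rfl
    calc (∑ j ∈ Finset.range M, (a (j + 1) - a j) * (A * G j) ^ 2)
        + ∑ i ∈ Finset.range M, (a ((M + i) + 1) - a (M + i)) * (A * G (M + i)) ^ 2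
        ≤ A ^ 2 * (c * Kl) * (M:ℝ) ^ (α - 2) + A ^ 2 * (c * Kr) * (M:ℝ) ^ (α - 2) :=
          add_le_add hleft hright
      _ = A ^ 2 * (c * (Kl + Kr)) * (M:ℝ) ^ (α - 2) := by ring
  have htotal : (∫ t in (0:ℝ)..T, ‖p t - Q t‖ ^ 2)
      ≤ A ^ 2 * (c * (Kl + Kr)) * (M:ℝ) ^ (α - 2) := by
    rw [hsplit]
    exact le_trans (Finset.sum_le_sum (fun j hj => hcell j (Finset.mem_range.mp hj))) hsum_bound
  -- conclude via sqrt
  have hsq : A ^ 2 * (c * (Kl + Kr)) * (M:ℝ) ^ (α - 2)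
      = (Real.sqrt (c * (Kl + Kr)) * A * (M:ℝ) ^ (α/2 - 1)) ^ 2 := by
    have h1 : Real.sqrt (c * (Kl + Kr)) ^ 2 = c * (Kl + Kr) :=
      Real.sq_sqrt (by positivity)
    have h2 : ((M:ℝ) ^ (α/2 - 1)) ^ 2 = (M:ℝ) ^ (α - 2) := by
      rw [← Real.rpow_natCast ((M:ℝ) ^ (α/2 - 1)) 2, ← Real.rpow_mul hMpos.le]
      congr 1
      push_cast; ring
    calc A ^ 2 * (c * (Kl + Kr)) * (M:ℝ) ^ (α - 2)
        = (c * (Kl + Kr)) * (A ^ 2 * (M:ℝ) ^ (α - 2)) := by ring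
      _ = (Real.sqrt (c * (Kl + Kr)) ^ 2) * (A ^ 2 * ((M:ℝ) ^ (α/2 - 1)) ^ 2) := by
          rw [h1, h2]
      _ = (Real.sqrt (c * (Kl + Kr)) * A * (M:ℝ) ^ (α/2 - 1)) ^ 2 := by ring
  calc Real.sqrt (∫ t in (0:ℝ)..T, ‖p t - Q t‖ ^ 2)
      ≤ Real.sqrt ((Real.sqrt (c * (Kl + Kr)) * A * (M:ℝ) ^ (α/2 - 1)) ^ 2) := by
        apply Real.sqrt_le_sqrt
        rw [← hsq]
        exact htotal
    _ = Real.sqrt (c * (Kl + Kr)) * A * (M:ℝ) ^ (α/2 - 1) := Real.sqrt_sq hRHSpos.le
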